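/- Suppose each f_i is μ-strongly convex and L-smooth, τ_j = p_0/(p_0 + 2(1−p_0)p_j) for each j, and let θ* be the unique minimizer of F. Define 𝓛 = max{ (2/p_0) max_{j} max_{i∈I_j} α_j γ_i , max_{j} [2(1−α_j) max_{i∈I_j} γ_i / (p_0 + 2(1−p_0)p_j)] , (L/(1−p_0)) max_{j} 1/(1−p_j) } and σ² = (2/p_0)‖∇φ(θ*)‖² + Σ_{j=1}^k [2(1−α_j)²/(p_0 + 2(1−p_0)p_j)]‖∇ψ_j(θ*)‖² + (1/(1−p_0)) Σ_{j=1}^k (1/(1−p_j))‖∇F_j(θ*)‖², where F_j(θ) = Σ_{i∈I_j} f_i(θ_i). Then for all θ ∈ (ℝ^d)^n, the expectation over (ξ_0,…,ξ_k) satisfies E‖G(θ)‖² ≤ 4𝓛 (F(θ) − F(θ*)) + 2σ². -/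

import Mathlib

open scoped BigOperators

noncomputable section

/-- `E d` is the Euclidean space ℝ^d. -/
abbrev E (d : ℕ) := EuclideanSpace ℝ (Fin d)

/-- `X n d = (ℝ^d)^n` with the ℓ2 product (Euclidean) norm. -/
abbrev X (n d : ℕ) := PiLp 2 (fun _ : Fin n => E d)

/-- The cluster `I_j` of clients assigned to cluster `j` by the assignment map `c`. -/
def clSet {n k : ℕ} (c : Fin n → Fin k) (j : Fin k) : Finset (Fin n) :=
  Finset.univ.filter fun i => c i = j

/-- The weighted cluster average θ̄_j = (Σ_{i∈I_j} γ_i θ_i)/(Σ_{i∈I_j} γ_i). -/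
def clAvg {n k d : ℕ} (c : Fin n → Fin k) (γ : Fin n → ℝ) (j : Fin k)
    (θ : X n d) : E d :=
  (∑ i ∈ clSet c j, γ i)⁻¹ • ∑ i ∈ clSet c j, γ i • θ i

/-- The global average θ̄ = (Σ_j Σ_{i∈I_j} α_j γ_i θ_i)/(Σ_j Σ_{i∈I_j} α_j γ_i). -/
def glAvg {n k d : ℕ} (c : Fin n → Fin k) (γ : Fin n → ℝ) (α : Fin k → ℝ)
    (θ : X n d) : E d :=
  (∑ j, ∑ i ∈ clSet c j, α j * γ i)⁻¹ • ∑ j, ∑ i ∈ clSet c j, (α j * γ i) • θ i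

/-- The within-cluster regularizer ψ_j(θ) = (1/2) Σ_{i∈I_j} γ_i ‖θ_i − θ̄_j‖². -/
def psi {n k d : ℕ} (c : Fin n → Fin k) (γ : Fin n → ℝ) (j : Fin k) (θ : X n d) : ℝ :=
  1/2 * ∑ i ∈ clSet c j, γ i * ‖θ i - clAvg c γ j θ‖ ^ 2

/-- The global regularizer φ(θ) = (1/2) Σ_j α_j Σ_{i∈I_j} γ_i ‖θ_i − θ̄‖². -/
def phi {n k d : ℕ} (c : Fin n → Fin k) (γ : Fin n → ℝ) (α : Fin k → ℝ)
    (θ : X n d) : ℝ :=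
  1/2 * ∑ j, α j * ∑ i ∈ clSet c j, γ i * ‖θ i - glAvg c γ α θ‖ ^ 2

/-- The cluster loss F_j(θ) = Σ_{i∈I_j} f_i(θ_i). -/
def clLoss {n k d : ℕ} (c : Fin n → Fin k) (f : Fin n → E d → ℝ) (j : Fin k)
    (θ : X n d) : ℝ :=
  ∑ i ∈ clSet c j, f i (θ i)

/-- An outcome of the Async-L2GD randomness: the Bernoulli draws (ξ_0, ξ_1, …, ξ_k). -/
abbrev Outcome (k : ℕ) := Bool × (Fin k → Bool)

/-- The probability of an outcome (ξ_0, ξ_1, …, ξ_k) of independent Bernoulli draws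
with parameters (p_0, p_1, …, p_k). -/
def wt {k : ℕ} (p0 : ℝ) (p : Fin k → ℝ) (ω : Outcome k) : ℝ :=
  (if ω.1 then p0 else 1 - p0) * ∏ j, (if ω.2 j then p j else 1 - p j)

/-- The Async-L2GD stochastic gradient oracle G(θ) for the outcome ω = (ξ_0, ξ). -/
def Orc {n k d : ℕ} (c : Fin n → Fin k) (γ : Fin n → ℝ) (α : Fin k → ℝ)
    (τ : Fin k → ℝ) (p0 : ℝ) (p : Fin k → ℝ) (f : Fin n → E d → ℝ)
    (θ : X n d) (ω : Outcome k) : X n d :=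
  WithLp.toLp 2 fun i =>
    if ω.1 then
      (γ i * α (c i) / p0) • (θ i - glAvg c γ α θ)
        + (γ i * τ (c i) * (1 - α (c i)) / p0) • (θ i - clAvg c γ (c i) θ)
    else if ω.2 (c i) then
      (γ i * (1 - τ (c i)) * (1 - α (c i)) / ((1 - p0) * p (c i)))
        • (θ i - clAvg c γ (c i) θ)
    else
      (1 / ((1 - p0) * (1 - p (c i)))) • gradient (f i) (θ i)


/-- The full objective F(θ) = Σ_i f_i(θ_i) + Σ_j (1−α_j) ψ_j(θ) + φ(θ). -/
def objF {n k d : ℕ} (c : Fin n → Fin k) (γ : Fin n → ℝ) (α : Fin k → ℝ)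
    (f : Fin n → E d → ℝ) (θ : X n d) : ℝ :=
  (∑ i, f i (θ i)) + (∑ j, (1 - α j) * psi c γ j θ) + phi c γ α θ

/-- The expected-smoothness constant 𝓛. -/
def esL {n k : ℕ} (hk : 0 < k) (c : Fin n → Fin k) (hc : ∀ j, (clSet c j).Nonempty)
    (γ : Fin n → ℝ) (α : Fin k → ℝ) (L p0 : ℝ) (p : Fin k → ℝ) : ℝ :=
  max (max
    ((2 / p0) * Finset.univ.sup' (Finset.univ_nonempty_iff.mpr ⟨⟨0, hk⟩⟩)
      fun j => (clSet c j).sup' (hc j) fun i => α j * γ i)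
    (Finset.univ.sup' (Finset.univ_nonempty_iff.mpr ⟨⟨0, hk⟩⟩)
      fun j => 2 * (1 - α j) * ((clSet c j).sup' (hc j) γ) / (p0 + 2 * (1 - p0) * p j)))
    ((L / (1 - p0)) * Finset.univ.sup' (Finset.univ_nonempty_iff.mpr ⟨⟨0, hk⟩⟩)
      fun j => 1 / (1 - p j))

/-- The oracle variance at the optimum,
σ² = (2/p_0)‖∇φ(θ*)‖² + Σ_j [2(1−α_j)²/(p_0+2(1−p_0)p_j)]‖∇ψ_j(θ*)‖²
   + (1/(1−p_0)) Σ_j (1/(1−p_j))‖∇F_j(θ*)‖². -/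
def sigmaSq {n k d : ℕ} (c : Fin n → Fin k) (γ : Fin n → ℝ) (α : Fin k → ℝ)
    (f : Fin n → E d → ℝ) (p0 : ℝ) (p : Fin k → ℝ) (θstar : X n d) : ℝ :=
  (2 / p0) * ‖gradient (phi c γ α) θstar‖ ^ 2
    + ∑ j, (2 * (1 - α j) ^ 2 / (p0 + 2 * (1 - p0) * p j)) *
        ‖gradient (psi c γ j) θstar‖ ^ 2
    + (1 / (1 - p0)) * ∑ j, (1 / (1 - p j)) * ‖gradient (clLoss c f j) θstar‖ ^ 2

open InnerProductSpace

section ConvexAux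

variable {H : Type*} [NormedAddCommGroup H] [InnerProductSpace ℝ H] [CompleteSpace H]

local notation "⟪" x ", " y "⟫" => @inner ℝ _ _ x y

/-- derivative of f along a line, in terms of a gradient function -/
lemma line_hasDerivAt (f : H → ℝ) (g : H → H) (hg : ∀ x, HasGradientAt f (g x) x)
    (y v : H) (t : ℝ) :
    HasDerivAt (fun s : ℝ => f (y + s • v)) ⟪g (y + t • v), v⟫ t := by
  have h1 : HasDerivAt (fun s : ℝ => y + s • v) v t := by
    simpa using ((hasDerivAt_id t).smul_const v).const_add y
  have h2 := (hasGradientAt_iff_hasFDerivAt.1 (hg (y + t • v))).comp_hasDerivAt t h1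
  simpa [Function.comp_def, toDual_apply_apply] using h2

/-- gradient inequality for convex differentiable functions -/
lemma grad_ineq (f : H → ℝ) (g : H → H) (hg : ∀ x, HasGradientAt f (g x) x)
    (hconv : ConvexOn ℝ Set.univ f) (x y : H) :
    f y + ⟪g y, x - y⟫ ≤ f x := by
  set φ : ℝ → ℝ := fun t => f (y + t • (x - y)) with hφ
  have hconvφ : ConvexOn ℝ Set.univ φ := by
    have := hconv.comp_affineMap (AffineMap.lineMap y x : ℝ →ᵃ[ℝ] H)
    have heq : φ = f ∘ (AffineMap.lineMap y x : ℝ →ᵃ[ℝ] H) := by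
      funext t; simp [hφ, AffineMap.lineMap_apply, add_comm]
    rw [heq]
    simpa using this
  have hder : HasDerivAt φ ⟪g y, x - y⟫ 0 := by
    simpa using line_hasDerivAt f g hg y (x - y) 0
  have hs := hconvφ.le_slope_of_hasDerivAt (Set.mem_univ (0:ℝ)) (Set.mem_univ 1)
    one_pos hder
  have hslope : slope φ 0 1 = f x - f y := by
    simp [slope_def_field, hφ]
  rw [hslope] at hs
  linarith

/-- descent lemma from Lipschitz gradient -/
lemma descent_lemma (f : H → ℝ) (g : H → H) (hg : ∀ x, HasGradientAt f (g x) x)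
    (L : ℝ) (hL : 0 < L) (hlip : ∀ x y, ‖g x - g y‖ ≤ L * ‖x - y‖) (x y : H) :
    f x ≤ f y + ⟪g y, x - y⟫ + L / 2 * ‖x - y‖ ^ 2 := by
  set v := x - y with hv
  set dd : ℝ → ℝ := fun t => L * ‖v‖ ^ 2 * t ^ 2 / 2 + t * ⟪g y, v⟫ + f y - f (y + t • v)
    with hdd
  have hder : ∀ t : ℝ, HasDerivAt dd (L * ‖v‖ ^ 2 * t + ⟪g y, v⟫ - ⟪g (y + t • v), v⟫) t := by
    intro t
    have h1 : HasDerivAt (fun t : ℝ => L * ‖v‖ ^ 2 * t ^ 2 / 2 + t * ⟪g y, v⟫ + f y)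
        (L * ‖v‖ ^ 2 * t + ⟪g y, v⟫) t := by
      have := (((hasDerivAt_pow 2 t).const_mul (L * ‖v‖ ^ 2)).div_const 2).add
        (((hasDerivAt_id t).mul_const ⟪g y, v⟫))
      have := this.add_const (f y)
      exact this.congr_deriv (by ring)
    simpa using h1.fun_sub (line_hasDerivAt f g hg y v t)
  have hmono : MonotoneOn dd (Set.Ici (0:ℝ)) := by
    apply monotoneOn_of_deriv_nonneg (convex_Ici 0)
    · exact (Continuous.continuousOn (by
        have : Differentiable ℝ dd := fun t => (hder t).differentiableAt
        exact this.continuous))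
    · intro t _; exact (hder t).differentiableAt.differentiableWithinAt
    · intro t ht
      rw [interior_Ici] at ht
      rw [(hder t).deriv]
      have h2 : ⟪g (y + t • v) - g y, v⟫ ≤ ‖g (y + t • v) - g y‖ * ‖v‖ :=
        real_inner_le_norm _ _
      have h3 : ‖g (y + t • v) - g y‖ ≤ L * (t * ‖v‖) := by
        have := hlip (y + t • v) y
        simpa [norm_smul, abs_of_pos (show (0:ℝ) < t from ht)] using this
      have h4 : ⟪g (y + t • v), v⟫ - ⟪g y, v⟫ ≤ L * t * ‖v‖ ^ 2 := by
        rw [← inner_sub_left]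
        calc ⟪g (y + t • v) - g y, v⟫ ≤ ‖g (y + t • v) - g y‖ * ‖v‖ := h2
          _ ≤ L * (t * ‖v‖) * ‖v‖ := by
              apply mul_le_mul_of_nonneg_right h3 (norm_nonneg v)
          _ = L * t * ‖v‖ ^ 2 := by ring
      linarith
  have h01 := hmono (Set.self_mem_Ici) (Set.mem_Ici.2 zero_le_one) zero_le_one
  have hd0 : dd 0 = 0 := by simp [hdd]
  have hd1 : dd 1 = L * ‖v‖ ^ 2 / 2 + ⟪g y, v⟫ + f y - f x := by
    simp [hdd, hv]
  rw [hd0, hd1] at h01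
  have : ‖x - y‖ ^ 2 = ‖v‖ ^ 2 := by rw [hv]
  rw [this]
  linarith

end ConvexAux

section ConvexAux2

variable {H : Type*} [NormedAddCommGroup H] [InnerProductSpace ℝ H] [CompleteSpace H]

local notation "⟪" x ", " y "⟫" => @inner ℝ _ _ x y

lemma convexOn_inner_right (a : H) : ConvexOn ℝ Set.univ (fun z => ⟪a, z⟫) := by
  refine ⟨convex_univ, fun z _ w _ s t hs ht hst => le_of_eq ?_⟩
  simp [inner_add_right, real_inner_smul_right]

lemma hasGradientAt_inner_right (a : H) (x : H) :
    HasGradientAt (fun z => ⟪a, z⟫) a x := by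
  rw [hasGradientAt_iff_hasFDerivAt]
  have : (fun z => ⟪a, z⟫) = fun z => (toDual ℝ H a) z := by
    funext z; simp [toDual_apply_apply]
  rw [this]
  exact (toDual ℝ H a).hasFDerivAt

/-- co-coercivity / expected-smoothness building block -/
lemma cocoercivity (f : H → ℝ) (g : H → H) (hg : ∀ x, HasGradientAt f (g x) x)
    (hconv : ConvexOn ℝ Set.univ f) (L : ℝ) (hL : 0 < L)
    (hlip : ∀ x y, ‖g x - g y‖ ≤ L * ‖x - y‖) (x y : H) :
    ‖g x - g y‖ ^ 2 ≤ 2 * L * (f x - f y - ⟪g y, x - y⟫) := by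
  set F : H → ℝ := fun z => f z - ⟪g y, z⟫ with hF
  set G : H → H := fun z => g z - g y with hG
  have hGg : ∀ z, HasGradientAt F (G z) z := by
    intro z
    rw [hasGradientAt_iff_hasFDerivAt] at *
    have h1 := hasGradientAt_iff_hasFDerivAt.1 (hg z)
    have h2 := hasGradientAt_iff_hasFDerivAt.1 (hasGradientAt_inner_right (g y) z)
    have := h1.fun_sub h2
    simpa [hG, map_sub] using this
  have hFconv : ConvexOn ℝ Set.univ F := by
    have h1 : ConvexOn ℝ Set.univ (fun z => -⟪g y, z⟫) := by
      refine ⟨convex_univ, fun z _ w _ s t hs ht hst => le_of_eq ?_⟩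
      simp [inner_add_right, real_inner_smul_right]; ring
    have := hconv.add h1
    simpa [hF, sub_eq_add_neg, Pi.add_def] using this
  have hGlip : ∀ x' y', ‖G x' - G y'‖ ≤ L * ‖x' - y'‖ := by
    intro x' y'; simpa [hG, sub_sub_sub_cancel_right] using hlip x' y'
  -- F y ≤ F u for all u
  have hmin : ∀ u, F y ≤ F u := by
    intro u
    have := grad_ineq F G hGg hFconv u y
    simpa [hG] using this
  -- descent at u = x - L⁻¹ • G x
  have hdesc := descent_lemma F G hGg L hL hGlip (x - L⁻¹ • G x) x
  have hkey : F (x - L⁻¹ • G x) ≤ F x - ‖G x‖ ^ 2 / (2 * L) := by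
    have h1 : (x - L⁻¹ • G x) - x = -(L⁻¹ • G x) := by abel
    rw [h1] at hdesc
    have h2 : ⟪G x, -(L⁻¹ • G x)⟫ = -(L⁻¹ * ‖G x‖ ^ 2) := by
      rw [inner_neg_right, real_inner_smul_right, real_inner_self_eq_norm_sq]
    have h3 : ‖-(L⁻¹ • G x)‖ ^ 2 = L⁻¹ ^ 2 * ‖G x‖ ^ 2 := by
      rw [norm_neg, norm_smul]
      rw [Real.norm_eq_abs, abs_of_pos (inv_pos.2 hL)]
      ring
    rw [h2, h3] at hdesc
    have hL' : L ≠ 0 := ne_of_gt hL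
    calc F (x - L⁻¹ • G x) ≤ F x + -(L⁻¹ * ‖G x‖ ^ 2) + L / 2 * (L⁻¹ ^ 2 * ‖G x‖ ^ 2) :=
          hdesc
      _ = F x - ‖G x‖ ^ 2 / (2 * L) := by field_simp; ring
  have := (hmin (x - L⁻¹ • G x)).trans hkey
  have hFxy : F x - F y = f x - f y - ⟪g y, x - y⟫ := by
    simp [hF, inner_sub_right]; ring
  have h5 : ‖G x‖ ^ 2 / (2 * L) ≤ F x - F y := by linarith
  have h6 : ‖G x‖ ^ 2 ≤ 2 * L * (F x - F y) := by
    rw [div_le_iff₀ (by positivity)] at h5; linarith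
  rw [hFxy] at h6
  simpa [hG] using h6

lemma convexOn_normSq : ConvexOn ℝ (Set.univ : Set H) (fun x => ‖x‖ ^ 2) := by
  refine ⟨convex_univ, fun a _ b _ s t hs ht hst => ?_⟩
  simp only [smul_eq_mul]
  have h1 : ‖s • a + t • b‖ ^ 2 = s ^ 2 * ‖a‖ ^ 2 + 2 * (s * t) * ⟪a, b⟫ + t ^ 2 * ‖b‖ ^ 2 := by
    rw [norm_add_sq_real, norm_smul, norm_smul, real_inner_smul_left, real_inner_smul_right]
    simp [abs_of_nonneg hs, abs_of_nonneg ht]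
    ring
  rw [h1]
  nlinarith [sq_nonneg (‖a‖ - ‖b‖), real_inner_le_norm a b, mul_nonneg hs ht,
    sq_nonneg (s + t), norm_nonneg a, norm_nonneg b]

end ConvexAux2


section MoreAux

variable {H : Type*} [NormedAddCommGroup H] [InnerProductSpace ℝ H] [CompleteSpace H]

local notation "⟪" x ", " y "⟫" => @inner ℝ _ _ x y

lemma line_hasDerivAt_pt (f : H → ℝ) (g0 : H) (y v : H) (t : ℝ)
    (hg : HasGradientAt f g0 (y + t • v)) :
    HasDerivAt (fun s : ℝ => f (y + s • v)) ⟪g0, v⟫ t := by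
  have h1 : HasDerivAt (fun s : ℝ => y + s • v) v t := by
    simpa using ((hasDerivAt_id t).smul_const v).const_add y
  have h2 := (hasGradientAt_iff_hasFDerivAt.1 hg).comp_hasDerivAt t h1
  simpa [Function.comp_def, toDual_apply_apply] using h2

omit [InnerProductSpace ℝ H] [CompleteSpace H] in
lemma normsq_add_le (x y : H) : ‖x + y‖ ^ 2 ≤ 2 * ‖x‖ ^ 2 + 2 * ‖y‖ ^ 2 := by
  have h := norm_add_le x y
  nlinarith [norm_nonneg x, norm_nonneg y, norm_nonneg (x + y), sq_nonneg (‖x‖ - ‖y‖)]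

omit [InnerProductSpace ℝ H] [CompleteSpace H] in
lemma normsq_smul [NormedSpace ℝ H] (a : ℝ) (x : H) : ‖a • x‖ ^ 2 = a ^ 2 * ‖x‖ ^ 2 := by
  rw [norm_smul, mul_pow, Real.norm_eq_abs, sq_abs]

end MoreAux

section Quadratic

variable {n d : ℕ}

local notation "⟪" x ", " y "⟫" => @inner ℝ _ _ x y

def mS (S : Finset (Fin n)) (u : Fin n → ℝ) (θ : X n d) : E d :=
  (∑ i ∈ S, u i)⁻¹ • ∑ i ∈ S, u i • θ i

def QS (S : Finset (Fin n)) (u : Fin n → ℝ) (θ : X n d) : ℝ :=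
  1/2 * ∑ i ∈ S, u i * ‖θ i - mS S u θ‖ ^ 2

def GS (S : Finset (Fin n)) (u : Fin n → ℝ) (θ : X n d) : X n d :=
  WithLp.toLp 2 fun i => if i ∈ S then u i • (θ i - mS S u θ) else 0

lemma coord_norm_le (x : X n d) (i : Fin n) : ‖x i‖ ≤ ‖x‖ := by
  have h1 : ‖x i‖ ^ 2 ≤ ‖x‖ ^ 2 := by
    have h0 := Finset.single_le_sum (f := fun i => ‖x i‖ ^ 2)
      (fun i _ => sq_nonneg _) (Finset.mem_univ i)
    rwa [← PiLp.norm_sq_eq_of_L2 _ x] at h0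
  nlinarith [norm_nonneg (x i), norm_nonneg x]

lemma mS_add (S : Finset (Fin n)) (u : Fin n → ℝ) (θ Δ : X n d) :
    mS S u (θ + Δ) = mS S u θ + mS S u Δ := by
  simp only [mS]
  rw [← smul_add, ← Finset.sum_add_distrib]
  congr 1
  refine Finset.sum_congr rfl fun i _ => ?_
  have : (θ + Δ) i = θ i + Δ i := rfl
  rw [this, smul_add]

lemma mS_sub (S : Finset (Fin n)) (u : Fin n → ℝ) (θ Δ : X n d) :
    mS S u (θ - Δ) = mS S u θ - mS S u Δ := by
  simp only [mS]
  rw [← smul_sub, ← Finset.sum_sub_distrib]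
  congr 1
  refine Finset.sum_congr rfl fun i _ => ?_
  have : (θ - Δ) i = θ i - Δ i := rfl
  rw [this, smul_sub]

lemma GS_sub (S : Finset (Fin n)) (u : Fin n → ℝ) (θ θ' : X n d) (i : Fin n) :
    GS S u (θ - θ') i = GS S u θ i - GS S u θ' i := by
  simp only [GS, mS_sub]
  by_cases h : i ∈ S
  · simp only [h, if_true]
    have : (θ - θ') i = θ i - θ' i := rfl
    rw [this, ← smul_sub]
    congr 1
    abel
  · simp [h]

lemma sum_GS_zero (S : Finset (Fin n)) (u : Fin n → ℝ) (hU : 0 < ∑ i ∈ S, u i)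
    (θ : X n d) : ∑ i ∈ S, u i • (θ i - mS S u θ) = 0 := by
  have h1 : ∑ i ∈ S, u i • (θ i - mS S u θ)
      = (∑ i ∈ S, u i • θ i) - (∑ i ∈ S, u i) • mS S u θ := by
    rw [Finset.sum_smul]
    rw [← Finset.sum_sub_distrib]
    refine Finset.sum_congr rfl fun i _ => ?_
    rw [smul_sub]
  rw [h1, mS, smul_inv_smul₀ (ne_of_gt hU), sub_self]

lemma inner_GS (S : Finset (Fin n)) (u : Fin n → ℝ) (θ v : X n d) :
    ⟪GS S u θ, v⟫ = ∑ i ∈ S, u i * ⟪θ i - mS S u θ, v i⟫ := by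
  rw [PiLp.inner_apply]
  rw [← Finset.sum_filter_add_sum_filter_not Finset.univ (· ∈ S)]
  have h2 : ∀ i ∈ Finset.univ.filter (· ∉ S), ⟪GS S u θ i, v i⟫ = 0 := by
    intro i hi
    simp only [Finset.mem_filter] at hi
    simp [GS, hi.2]
  rw [Finset.sum_congr rfl h2, Finset.sum_const_zero, add_zero]
  have h3 : Finset.univ.filter (· ∈ S) = S := by
    ext i; simp
  rw [h3]
  refine Finset.sum_congr rfl fun i hi => ?_
  have : GS S u θ i = u i • (θ i - mS S u θ) := if_pos hi
  rw [this, real_inner_smul_left]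

lemma QS_expand (S : Finset (Fin n)) (u : Fin n → ℝ) (hU : 0 < ∑ i ∈ S, u i)
    (θ Δ : X n d) :
    QS S u (θ + Δ) = QS S u θ + ⟪GS S u θ, Δ⟫ + QS S u Δ := by
  have key : ∀ i ∈ S, u i * ‖(θ + Δ) i - mS S u (θ + Δ)‖ ^ 2
      = u i * ‖θ i - mS S u θ‖ ^ 2 + 2 * (u i * ⟪θ i - mS S u θ, Δ i - mS S u Δ⟫)
        + u i * ‖Δ i - mS S u Δ‖ ^ 2 := by
    intro i _
    have h1 : (θ + Δ) i - mS S u (θ + Δ)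
        = (θ i - mS S u θ) + (Δ i - mS S u Δ) := by
      rw [mS_add]
      have : (θ + Δ) i = θ i + Δ i := rfl
      rw [this]; abel
    rw [h1, norm_add_sq_real]; ring
  have hmid : ∑ i ∈ S, u i * ⟪θ i - mS S u θ, Δ i - mS S u Δ⟫
      = ⟪GS S u θ, Δ⟫ := by
    rw [inner_GS]
    have h4 : ∀ i ∈ S, u i * ⟪θ i - mS S u θ, Δ i - mS S u Δ⟫
        = u i * ⟪θ i - mS S u θ, Δ i⟫ - ⟪u i • (θ i - mS S u θ), mS S u Δ⟫ := by
      intro i _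
      rw [real_inner_smul_left, inner_sub_right]
      ring
    rw [Finset.sum_congr rfl h4, Finset.sum_sub_distrib]
    rw [← sum_inner, sum_GS_zero S u hU θ]
    simp
  simp only [QS]
  rw [Finset.sum_congr rfl key]
  rw [Finset.sum_add_distrib, Finset.sum_add_distrib, ← Finset.mul_sum]
  rw [hmid]
  ring

lemma QS_nonneg (S : Finset (Fin n)) (u : Fin n → ℝ) (hu : ∀ i ∈ S, 0 ≤ u i)
    (θ : X n d) : 0 ≤ QS S u θ := by
  unfold QS
  have : 0 ≤ ∑ i ∈ S, u i * ‖θ i - mS S u θ‖ ^ 2 :=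
    Finset.sum_nonneg fun i hi => mul_nonneg (hu i hi) (sq_nonneg _)
  linarith

lemma normSq_GS (S : Finset (Fin n)) (u : Fin n → ℝ) (θ : X n d) :
    ‖GS S u θ‖ ^ 2 = ∑ i ∈ S, (u i) ^ 2 * ‖θ i - mS S u θ‖ ^ 2 := by
  rw [PiLp.norm_sq_eq_of_L2]
  rw [← Finset.sum_filter_add_sum_filter_not Finset.univ (· ∈ S)]
  have h2 : ∀ i ∈ Finset.univ.filter (· ∉ S), ‖GS S u θ i‖ ^ 2 = 0 := by
    intro i hi
    simp only [Finset.mem_filter] at hi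
    simp [GS, hi.2]
  rw [Finset.sum_congr rfl h2, Finset.sum_const_zero, add_zero]
  have h3 : Finset.univ.filter (· ∈ S) = S := by ext i; simp
  rw [h3]
  refine Finset.sum_congr rfl fun i hi => ?_
  simp only [GS, hi, if_true]
  rw [norm_smul, mul_pow, Real.norm_eq_abs, sq_abs]

lemma normSq_GS_le (S : Finset (Fin n)) (hS : S.Nonempty) (u : Fin n → ℝ)
    (hu : ∀ i ∈ S, 0 ≤ u i) (θ : X n d) :
    ‖GS S u θ‖ ^ 2 ≤ S.sup' hS u * (2 * QS S u θ) := by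
  rw [normSq_GS]
  have h1 : S.sup' hS u * (2 * QS S u θ)
      = ∑ i ∈ S, S.sup' hS u * (u i * ‖θ i - mS S u θ‖ ^ 2) := by
    rw [← Finset.mul_sum]
    unfold QS
    ring
  rw [h1]
  refine Finset.sum_le_sum fun i hi => ?_
  have h2 : u i ≤ S.sup' hS u := Finset.le_sup' u hi
  have h3 := hu i hi
  have h4 := mul_le_mul_of_nonneg_right h2
    (mul_nonneg h3 (sq_nonneg ‖θ i - mS S u θ‖))
  calc u i ^ 2 * ‖θ i - mS S u θ‖ ^ 2
      = u i * (u i * ‖θ i - mS S u θ‖ ^ 2) := by ring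
    _ ≤ S.sup' hS u * (u i * ‖θ i - mS S u θ‖ ^ 2) := h4

lemma hasGradientAt_QS (S : Finset (Fin n)) (u : Fin n → ℝ)
    (hu : ∀ i ∈ S, 0 ≤ u i) (hU : 0 < ∑ i ∈ S, u i) (θ : X n d) :
    HasGradientAt (QS S u) (GS S u θ) θ := by
  rw [hasGradientAt_iff_hasFDerivAt, hasFDerivAt_iff_isLittleO_nhds_zero]
  have heq : (fun h : X n d => QS S u (θ + h) - QS S u θ - (toDual ℝ (X n d) (GS S u θ)) h)
      = fun h => QS S u h := by
    funext h
    rw [QS_expand S u hU θ h, toDual_apply_apply]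
    ring
  rw [heq]
  -- bound QS h by C * ‖h‖^2
  set c1 : ℝ := ∑ i ∈ S, |(∑ i' ∈ S, u i')⁻¹| * |u i| with hc1
  have hmS : ∀ h : X n d, ‖mS S u h‖ ≤ c1 * ‖h‖ := by
    intro h
    have : mS S u h = ∑ i ∈ S, ((∑ i' ∈ S, u i')⁻¹ * u i) • h i := by
      rw [mS, Finset.smul_sum]
      refine Finset.sum_congr rfl fun i _ => ?_
      rw [smul_smul]
    rw [this]
    calc ‖∑ i ∈ S, ((∑ i' ∈ S, u i')⁻¹ * u i) • h i‖
        ≤ ∑ i ∈ S, ‖((∑ i' ∈ S, u i')⁻¹ * u i) • h i‖ := norm_sum_le _ _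
      _ ≤ ∑ i ∈ S, |(∑ i' ∈ S, u i')⁻¹| * |u i| * ‖h‖ := by
          refine Finset.sum_le_sum fun i hi => ?_
          rw [norm_smul, Real.norm_eq_abs, abs_mul]
          exact mul_le_mul_of_nonneg_left (coord_norm_le h i) (by positivity)
      _ = c1 * ‖h‖ := by rw [hc1, Finset.sum_mul]
  set C : ℝ := 1/2 * (∑ i ∈ S, u i) * (1 + c1) ^ 2 with hC
  have hc1nn : 0 ≤ c1 := Finset.sum_nonneg fun i _ => by positivity
  have hbound : ∀ h : X n d, |QS S u h| ≤ C * ‖h‖ ^ 2 := by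
    intro h
    have hQnn := QS_nonneg S u hu h
    rw [abs_of_nonneg hQnn]
    unfold QS
    have h5 : ∀ i ∈ S, u i * ‖h i - mS S u h‖ ^ 2 ≤ u i * ((1 + c1) ^ 2 * ‖h‖ ^ 2) := by
      intro i hi
      have h6 : ‖h i - mS S u h‖ ≤ (1 + c1) * ‖h‖ := by
        calc ‖h i - mS S u h‖ ≤ ‖h i‖ + ‖mS S u h‖ := norm_sub_le _ _
          _ ≤ ‖h‖ + c1 * ‖h‖ := add_le_add (coord_norm_le h i) (hmS h)
          _ = (1 + c1) * ‖h‖ := by ring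
      have h7 : ‖h i - mS S u h‖ ^ 2 ≤ ((1 + c1) * ‖h‖) ^ 2 := by
        have := norm_nonneg (h i - mS S u h)
        nlinarith
      have := hu i hi
      nlinarith
    calc (1:ℝ)/2 * ∑ i ∈ S, u i * ‖h i - mS S u h‖ ^ 2
        ≤ 1/2 * ∑ i ∈ S, u i * ((1 + c1) ^ 2 * ‖h‖ ^ 2) := by
          have := Finset.sum_le_sum h5
          linarith
      _ = C * ‖h‖ ^ 2 := by rw [hC, ← Finset.sum_mul]; ring
  have hBigO : (fun h : X n d => QS S u h) =O[nhds 0] (fun h => ‖h‖ ^ 2) := by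
    refine Asymptotics.IsBigO.of_bound C (Filter.Eventually.of_forall fun h => ?_)
    rw [Real.norm_eq_abs]
    calc |QS S u h| ≤ C * ‖h‖ ^ 2 := hbound h
      _ ≤ C * ‖‖h‖ ^ 2‖ := by rw [Real.norm_eq_abs, abs_of_nonneg (sq_nonneg _)]
  have hsq : (fun h : X n d => ‖h‖ ^ 2) =o[nhds 0] (fun h => h) := by
    have h1 : (fun h : X n d => ‖h‖) =o[nhds 0] (fun _ => (1:ℝ)) := by
      rw [Asymptotics.isLittleO_one_iff]
      simpa using continuous_norm.tendsto (0 : X n d)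
    have h2 := (Asymptotics.isBigO_refl (fun h : X n d => ‖h‖) (nhds 0)).mul_isLittleO h1
    have h3 : (fun h : X n d => ‖h‖ * 1) =O[nhds 0] (fun h => h) := by
      simpa using (Asymptotics.isBigO_refl (fun h : X n d => h) (nhds 0)).norm_left
    have h4 := h2.trans_isBigO h3
    simpa [pow_two] using h4
  exact hBigO.trans_isLittleO hsq

end Quadratic


section QuadraticMore

variable {n d : ℕ}

lemma GS_decomp (S : Finset (Fin n)) (u : Fin n → ℝ) (θ θ' : X n d) :
    GS S u θ = GS S u (θ - θ') + GS S u θ' := by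
  refine PiLp.ext fun i => ?_
  have h1 := GS_sub S u θ θ' i
  have h2 : (GS S u (θ - θ') + GS S u θ') i = GS S u (θ - θ') i + GS S u θ' i := rfl
  rw [h2, h1]
  abel

lemma GS_theta_bound (S : Finset (Fin n)) (hS : S.Nonempty) (u : Fin n → ℝ)
    (hu : ∀ i ∈ S, 0 ≤ u i) (θ θ' : X n d) :
    ‖GS S u θ‖ ^ 2 ≤ 4 * (S.sup' hS u) * QS S u (θ - θ') + 2 * ‖GS S u θ'‖ ^ 2 := by
  have h1 : ‖GS S u θ‖ ^ 2 ≤ 2 * ‖GS S u (θ - θ')‖ ^ 2 + 2 * ‖GS S u θ'‖ ^ 2 := by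
    rw [GS_decomp S u θ θ']
    exact normsq_add_le _ _
  have h2 := normSq_GS_le S hS u hu (θ - θ')
  linarith

end QuadraticMore

section Marginal

variable {k : ℕ}

lemma key_marginal (p : Fin k → ℝ) (j : Fin k) (t : Bool → ℝ) :
    ∑ g : Fin k → Bool, (∏ j', if g j' then p j' else 1 - p j') * t (g j)
      = p j * t true + (1 - p j) * t false := by
  classical
  have h1 := Fintype.prod_sum (f := fun (j' : Fin k) (b : Bool) =>
    (if b then p j' else 1 - p j') * (if j' = j then t b else 1))
  have h2 : ∀ j' : Fin k,
      (∑ b : Bool, (if b then p j' else 1 - p j') * (if j' = j then t b else 1))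
        = if j' = j then p j * t true + (1 - p j) * t false else 1 := by
    intro j'
    rw [Fintype.sum_bool]
    by_cases h : j' = j
    · subst h; simp
    · simp only [h, if_false, if_true]
      simp
  have h3 : ∏ j' : Fin k, (∑ b : Bool, (if b then p j' else 1 - p j') * (if j' = j then t b else 1))
      = p j * t true + (1 - p j) * t false := by
    rw [Finset.prod_congr rfl (fun j' _ => h2 j'), Finset.prod_ite_eq' Finset.univ j
      (fun _ => p j * t true + (1 - p j) * t false)]
    simp
  have h4 : ∀ g : Fin k → Bool,
      ∏ j' : Fin k, ((if g j' then p j' else 1 - p j') * (if j' = j then t (g j') else 1))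
        = (∏ j', if g j' then p j' else 1 - p j') * t (g j) := by
    intro g
    rw [Finset.prod_mul_distrib, Finset.prod_ite_eq' Finset.univ j (fun j' => t (g j'))]
    simp
  rw [← h3, h1]
  exact Finset.sum_congr rfl fun g _ => (h4 g).symm

lemma sum_wt_mul (p0 : ℝ) (p : Fin k → ℝ) (j : Fin k) (A B C : ℝ) :
    ∑ ω : Outcome k, wt p0 p ω * (if ω.1 then A else if ω.2 j then B else C)
      = p0 * A + (1 - p0) * (p j * B + (1 - p j) * C) := by
  rw [Fintype.sum_prod_type, Fintype.sum_bool]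
  have hone : ∑ g : Fin k → Bool, (∏ j', if g j' then p j' else 1 - p j') = 1 := by
    have := key_marginal p j (fun _ => 1)
    simpa using this
  have htrue : ∑ g : Fin k → Bool,
      wt p0 p (true, g) * (if (true, g).1 then A else if (true, g).2 j then B else C)
        = p0 * A := by
    have hh : ∀ g : Fin k → Bool,
        wt p0 p (true, g) * (if (true, g).1 then A else if (true, g).2 j then B else C)
          = A * p0 * (∏ j', if g j' then p j' else 1 - p j') := by
      intro g
      simp only [wt]
      norm_num
      ring
    rw [Finset.sum_congr rfl fun g _ => hh g, ← Finset.mul_sum, hone]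
    ring
  have hfalse : ∑ g : Fin k → Bool,
      wt p0 p (false, g) * (if (false, g).1 then A else if (false, g).2 j then B else C)
        = (1 - p0) * (p j * B + (1 - p j) * C) := by
    have hh : ∀ g : Fin k → Bool,
        wt p0 p (false, g) * (if (false, g).1 then A else if (false, g).2 j then B else C)
          = (1 - p0) * ((∏ j', if g j' then p j' else 1 - p j') * (if g j then B else C)) := by
      intro g
      simp only [wt]
      simp
      ring
    rw [Finset.sum_congr rfl fun g _ => hh g, ← Finset.mul_sum]
    have h9 := key_marginal p j (fun b => if b then B else C)
    simp only [if_true, if_false] at h9 ⊢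
    rw [h9]
    simp
  rw [htrue, hfalse]

end Marginal

section SumGrad

variable {n d : ℕ}

local notation "⟪" x ", " y "⟫" => @inner ℝ _ _ x y

def iteV (S : Finset (Fin n)) (z : Fin n → E d) : X n d :=
  WithLp.toLp 2 fun i => if i ∈ S then z i else 0

lemma normSq_ite (S : Finset (Fin n)) (z : Fin n → E d) :
    ‖iteV S z‖ ^ 2 = ∑ i ∈ S, ‖z i‖ ^ 2 := by
  rw [PiLp.norm_sq_eq_of_L2]
  rw [← Finset.sum_filter_add_sum_filter_not Finset.univ (· ∈ S)]
  have h2 : ∀ i ∈ Finset.univ.filter (· ∉ S),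
      ‖iteV S z i‖ ^ 2 = 0 := by
    intro i hi
    simp only [Finset.mem_filter] at hi
    simp [iteV, hi.2]
  rw [Finset.sum_congr rfl h2, Finset.sum_const_zero, add_zero]
  have h3 : Finset.univ.filter (· ∈ S) = S := by ext i; simp
  rw [h3]
  exact Finset.sum_congr rfl fun i hi => by simp [iteV, hi]

lemma inner_ite (S : Finset (Fin n)) (z : Fin n → E d) (v : X n d) :
    ⟪iteV S z, v⟫ = ∑ i ∈ S, ⟪z i, v i⟫ := by
  rw [PiLp.inner_apply]
  rw [← Finset.sum_filter_add_sum_filter_not Finset.univ (· ∈ S)]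
  have h2 : ∀ i ∈ Finset.univ.filter (· ∉ S),
      ⟪iteV S z i, v i⟫ = 0 := by
    intro i hi
    simp only [Finset.mem_filter] at hi
    simp [iteV, hi.2]
  rw [Finset.sum_congr rfl h2, Finset.sum_const_zero, add_zero]
  have h3 : Finset.univ.filter (· ∈ S) = S := by ext i; simp
  rw [h3]
  exact Finset.sum_congr rfl fun i hi => by simp [iteV, hi]

lemma hasGradientAt_sumF (S : Finset (Fin n)) (f : Fin n → E d → ℝ)
    (hdiff : ∀ i, Differentiable ℝ (f i)) (θ : X n d) :
    HasGradientAt (fun θ' : X n d => ∑ i ∈ S, f i (θ' i))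
      (iteV S (fun i => gradient (f i) (θ i))) θ := by
  rw [hasGradientAt_iff_hasFDerivAt]
  have hF : HasFDerivAt (fun θ' : X n d => ∑ i ∈ S, f i (θ' i))
      (∑ i ∈ S, (toDual ℝ (E d) (gradient (f i) (θ i))).comp
        (PiLp.proj 2 (fun _ : Fin n => E d) i)) θ := by
    apply HasFDerivAt.fun_sum
    intro i _
    have h1 := hasGradientAt_iff_hasFDerivAt.1 ((hdiff i (θ i)).hasGradientAt)
    have h2 := h1.comp θ (PiLp.proj (𝕜 := ℝ) 2 (fun _ : Fin n => E d) i).hasFDerivAt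
    exact h2
  refine hF.congr_fderiv (Eq.symm ?_)
  apply ContinuousLinearMap.ext
  intro v
  rw [toDual_apply_apply]
  rw [inner_ite S (fun i => gradient (f i) (θ i)) v]
  simp only [ContinuousLinearMap.sum_apply, ContinuousLinearMap.coe_comp', Function.comp_apply,
    toDual_apply_apply, PiLp.proj_apply]

end SumGrad


set_option maxHeartbeats 2000000

lemma coefI2 (p0 pj g a N : ℝ) (hp0 : 0 < p0) (hq : 0 < 1 - p0) (hpj : 0 < pj)
    (hD : 0 < p0 + 2 * (1 - p0) * pj) :
    p0 * (2 * ((g * (p0 / (p0 + 2 * (1 - p0) * pj)) * (1 - a) / p0) ^ 2 * N))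
      + (1 - p0) * (pj * ((g * (1 - p0 / (p0 + 2 * (1 - p0) * pj)) * (1 - a)
          / ((1 - p0) * pj)) ^ 2 * N))
    = (2 * (1 - a) ^ 2 / (p0 + 2 * (1 - p0) * pj)) * (g ^ 2 * N) := by
  have h1 : p0 + 2 * (1 - p0) * pj ≠ 0 := hD.ne'
  field_simp
  ring

lemma coefI3 (q pj N : ℝ) (hq : 0 < q) (hpj : 0 < pj) :
    q * (pj * ((1 / (q * pj)) ^ 2 * N)) = (1 / (q * pj)) * N := by
  field_simp

/-- bounded second moment of the Async-L2GD oracle: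
E‖G(θ)‖² ≤ 4𝓛(F(θ) − F(θ*)) + 2σ². -/
theorem oracle_second_moment {n k d : ℕ} (hk : 0 < k)
    (c : Fin n → Fin k) (hc : ∀ j, (clSet c j).Nonempty)
    (γ : Fin n → ℝ) (hγ : ∀ i, 0 < γ i)
    (α : Fin k → ℝ) (hα : ∀ j, α j ∈ Set.Ioc (0 : ℝ) 1)
    (f : Fin n → E d → ℝ) (μ L : ℝ) (hμ : 0 < μ) (hL : 0 < L)
    (hdiff : ∀ i, Differentiable ℝ (f i))
    (hsc : ∀ i, ConvexOn ℝ Set.univ (fun x => f i x - μ / 2 * ‖x‖ ^ 2))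
    (hsm : ∀ i, ∀ x y, ‖gradient (f i) x - gradient (f i) y‖ ≤ L * ‖x - y‖)
    (p0 : ℝ) (hp0 : p0 ∈ Set.Ioo (0 : ℝ) 1)
    (p : Fin k → ℝ) (hp : ∀ j, p j ∈ Set.Ioo (0 : ℝ) 1)
    (τ : Fin k → ℝ) (hτ : ∀ j, τ j = p0 / (p0 + 2 * (1 - p0) * p j))
    (θstar : X n d) (hmin : ∀ θ, objF c γ α f θstar ≤ objF c γ α f θ) :
    ∀ θ : X n d,
      ∑ ω : Outcome k, wt p0 p ω * ‖Orc c γ α τ p0 p f θ ω‖ ^ 2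
        ≤ 4 * esL hk c hc γ α L p0 p * (objF c γ α f θ - objF c γ α f θstar)
          + 2 * sigmaSq c γ α f p0 p θstar := by

  intro θ
  classical
  obtain ⟨hp0pos, hp0lt⟩ := hp0
  have hq0 : (0:ℝ) < 1 - p0 := by linarith
  have hppos : ∀ j, 0 < p j := fun j => (hp j).1
  have hqj : ∀ j, (0:ℝ) < 1 - p j := fun j => by linarith [(hp j).2]
  have hDpos : ∀ j, (0:ℝ) < p0 + 2 * (1 - p0) * p j := fun j => by nlinarith [(hp j).1]
  have hα0 : ∀ j, 0 < α j := fun j => (hα j).1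
  have hα1 : ∀ j, α j ≤ 1 := fun j => (hα j).2
  set w : Fin n → ℝ := fun i => α (c i) * γ i with hw
  have hwval : ∀ i, w i = α (c i) * γ i := fun _ => rfl
  have hwpos : ∀ i, 0 < w i := fun i => mul_pos (hα0 (c i)) (hγ i)
  have hmemcl : ∀ i, i ∈ clSet c (c i) := fun i => by simp [clSet]
  have hcij : ∀ j, ∀ i ∈ clSet c j, c i = j := by
    intro j i hi; simpa [clSet] using hi
  obtain ⟨i0, _⟩ := hc ⟨0, hk⟩
  have hne : (Finset.univ : Finset (Fin n)).Nonempty := ⟨i0, Finset.mem_univ i0⟩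
  have hUuniv : 0 < ∑ i, w i := Finset.sum_pos (fun i _ => hwpos i) hne
  have hUj : ∀ j, 0 < ∑ i ∈ clSet c j, γ i :=
    fun j => Finset.sum_pos (fun i _ => hγ i) (hc j)
  -- collapse the double sums : glAvg = mS over univ with weights w
  have hglAvg : ∀ θ' : X n d, glAvg c γ α θ' = mS Finset.univ w θ' := by
    intro θ'
    unfold glAvg mS
    have e1 : ∑ j, ∑ i ∈ clSet c j, α j * γ i = ∑ i, w i := by
      simp only [clSet]
      rw [← Finset.sum_fiberwise Finset.univ c (fun i => w i)]
      exact Finset.sum_congr rfl fun j _ => Finset.sum_congr rfl fun i hi => by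
        have hci : c i = j := by simpa using hi
        rw [hwval i, hci]
    have e2 : ∑ j, ∑ i ∈ clSet c j, (α j * γ i) • θ' i = ∑ i, w i • θ' i := by
      simp only [clSet]
      rw [← Finset.sum_fiberwise Finset.univ c (fun i => w i • θ' i)]
      exact Finset.sum_congr rfl fun j _ => Finset.sum_congr rfl fun i hi => by
        have hci : c i = j := by simpa using hi
        rw [hwval i, hci]
    rw [e1, e2]
  have hphiQ : ∀ θ' : X n d, phi c γ α θ' = QS Finset.univ w θ' := by
    intro θ'
    unfold phi QS
    rw [← hglAvg θ']
    congr 1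
    rw [← Finset.sum_fiberwise Finset.univ c
      (fun i => w i * ‖θ' i - glAvg c γ α θ'‖ ^ 2)]
    simp only [clSet]
    refine Finset.sum_congr rfl fun j _ => ?_
    rw [Finset.mul_sum]
    refine Finset.sum_congr rfl fun i hi => ?_
    have hci : c i = j := by simpa using hi
    rw [hwval i, hci]
    ring
  have hpsiQ : ∀ (j) (θ' : X n d), psi c γ j θ' = QS (clSet c j) γ θ' :=
    fun j θ' => rfl
  have hpsiQf : ∀ j, psi c γ j = QS (clSet c j) γ (d := d) :=
    fun j => funext (hpsiQ j)
  -- gradient identities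
  have hgradphi : ∀ θ' : X n d, HasGradientAt (phi c γ α) (GS Finset.univ w θ') θ' := by
    intro θ'
    have h := hasGradientAt_QS Finset.univ w (fun i _ => (hwpos i).le) hUuniv θ'
    have heq : phi c γ α = QS Finset.univ w := funext hphiQ
    rw [heq]
    exact h
  have hgradpsi : ∀ (j) (θ' : X n d),
      HasGradientAt (psi c γ j) (GS (clSet c j) γ θ') θ' := by
    intro j θ'
    have h := hasGradientAt_QS (clSet c j) γ (fun i _ => (hγ i).le) (hUj j) θ'
    rw [hpsiQf j]
    exact h
  have hgradcl : ∀ (j) (θ' : X n d), HasGradientAt (clLoss c f j)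
      (iteV (clSet c j) (fun i => gradient (f i) (θ' i))) θ' := by
    intro j θ'
    exact hasGradientAt_sumF (clSet c j) f hdiff θ'
  have hgφ : gradient (phi c γ α) θstar = GS Finset.univ w θstar :=
    (hgradphi θstar).gradient
  have hgψ : ∀ j, gradient (psi c γ j) θstar = GS (clSet c j) γ θstar :=
    fun j => (hgradpsi j θstar).gradient
  have hgF : ∀ j, gradient (clLoss c f j) θstar
      = iteV (clSet c j) (fun i => gradient (f i) (θstar i)) :=
    fun j => (hgradcl j θstar).gradient
  -- gradient of objF at θstar
  set Gtot : X n d := iteV Finset.univ (fun i => gradient (f i) (θstar i))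
      + (∑ j, (1 - α j) • GS (clSet c j) γ θstar) + GS Finset.univ w θstar with hGtot
  have hobj : HasGradientAt (objF c γ α f) Gtot θstar := by
    rw [hasGradientAt_iff_hasFDerivAt]
    have h1 := hasGradientAt_iff_hasFDerivAt.1 (hasGradientAt_sumF Finset.univ f hdiff θstar)
    have h2 : ∀ j, HasFDerivAt (fun θ' : X n d => (1 - α j) * psi c γ j θ')
        ((1 - α j) • (toDual ℝ (X n d) (GS (clSet c j) γ θstar))) θstar :=
      fun j => (hasGradientAt_iff_hasFDerivAt.1 (hgradpsi j θstar)).const_mul (1 - α j)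
    have h3 : HasFDerivAt (fun θ' : X n d => ∑ j, (1 - α j) * psi c γ j θ')
        (∑ j, (1 - α j) • (toDual ℝ (X n d) (GS (clSet c j) γ θstar))) θstar :=
      HasFDerivAt.fun_sum fun j _ => h2 j
    have h4 := hasGradientAt_iff_hasFDerivAt.1 (hgradphi θstar)
    have h5 := (h1.add h3).add h4
    have hCLM : (toDual ℝ (X n d) (iteV Finset.univ (fun i => gradient (f i) (θstar i)))
          + ∑ j, (1 - α j) • toDual ℝ (X n d) (GS (clSet c j) γ θstar))
          + toDual ℝ (X n d) (GS Finset.univ w θstar)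
        = toDual ℝ (X n d) Gtot := by
      apply ContinuousLinearMap.ext
      intro v
      simp only [ContinuousLinearMap.add_apply, ContinuousLinearMap.sum_apply,
        ContinuousLinearMap.smul_apply, toDual_apply_apply, smul_eq_mul]
      rw [hGtot]
      rw [inner_add_left, inner_add_left, sum_inner]
      congr 2
      exact Finset.sum_congr rfl fun j _ => by rw [real_inner_smul_left]
    rw [← hCLM]
    exact h5
  -- first-order condition at the minimizer
  have hfoc : ∀ v : X n d, (inner ℝ Gtot v : ℝ) = 0 := by
    intro v
    have hline := line_hasDerivAt_pt (objF c γ α f) Gtot θstar v 0 (by simpa using hobj)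
    have hlm : IsLocalMin (fun s : ℝ => objF c γ α f (θstar + s • v)) 0 :=
      Filter.Eventually.of_forall fun t => by simpa using hmin (θstar + t • v)
    have hz := hlm.deriv_eq_zero
    rwa [hline.deriv] at hz
  -- Bregman gap decomposition
  set Df : Fin n → ℝ := fun i =>
    f i (θ i) - f i (θstar i)
      - (inner ℝ (gradient (f i) (θstar i)) (θ i - θstar i) : ℝ) with hDf
  have hDfval : ∀ i, Df i = f i (θ i) - f i (θstar i)
      - (inner ℝ (gradient (f i) (θstar i)) (θ i - θstar i) : ℝ) := fun _ => rfl
  have hθdec : θ = θstar + (θ - θstar) := by abel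
  have hcoord : ∀ i, (θ - θstar) i = θ i - θstar i := fun i => rfl
  have hgap : objF c γ α f θ - objF c γ α f θstar
      = (∑ i, Df i) + (∑ j, (1 - α j) * QS (clSet c j) γ (θ - θstar))
        + QS Finset.univ w (θ - θstar) := by
    have hpsiexp : ∀ j, psi c γ j θ = psi c γ j θstar
        + (inner ℝ (GS (clSet c j) γ θstar) (θ - θstar) : ℝ)
        + QS (clSet c j) γ (θ - θstar) := by
      intro j
      rw [hpsiQ j θ]
      conv_lhs => rw [hθdec]
      rw [QS_expand (clSet c j) γ (hUj j) θstar (θ - θstar)]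
      rw [hpsiQ j θstar]
    have hphiexp : phi c γ α θ = phi c γ α θstar
        + (inner ℝ (GS Finset.univ w θstar) (θ - θstar) : ℝ)
        + QS Finset.univ w (θ - θstar) := by
      rw [hphiQ θ, hphiQ θstar]
      conv_lhs => rw [hθdec]
      rw [QS_expand Finset.univ w hUuniv θstar (θ - θstar)]
    have hfocΔ : (∑ i, (inner ℝ (gradient (f i) (θstar i)) ((θ - θstar) i) : ℝ))
        + (∑ j, (1 - α j) * (inner ℝ (GS (clSet c j) γ θstar) (θ - θstar) : ℝ))
        + (inner ℝ (GS Finset.univ w θstar) (θ - θstar) : ℝ) = 0 := by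
      have h := hfoc (θ - θstar)
      rw [hGtot] at h
      rw [inner_add_left, inner_add_left, sum_inner] at h
      rw [inner_ite Finset.univ (fun i => gradient (f i) (θstar i)) (θ - θstar)] at h
      have h2 : ∀ j ∈ (Finset.univ : Finset (Fin k)),
          (inner ℝ ((1 - α j) • GS (clSet c j) γ θstar) (θ - θstar) : ℝ)
            = (1 - α j) * (inner ℝ (GS (clSet c j) γ θstar) (θ - θstar) : ℝ) :=
        fun j _ => real_inner_smul_left _ _ _
      rw [Finset.sum_congr rfl h2] at h
      exact h
    have ha : (∑ i, f i (θ i)) - (∑ i, f i (θstar i))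
        = (∑ i, Df i)
          + ∑ i, (inner ℝ (gradient (f i) (θstar i)) ((θ - θstar) i) : ℝ) := by
      rw [← Finset.sum_sub_distrib, ← Finset.sum_add_distrib]
      refine Finset.sum_congr rfl fun i _ => ?_
      rw [hDfval i, hcoord i]
      ring
    have hb : (∑ j, (1 - α j) * psi c γ j θ) - (∑ j, (1 - α j) * psi c γ j θstar)
        = (∑ j, (1 - α j) * (inner ℝ (GS (clSet c j) γ θstar) (θ - θstar) : ℝ))
          + ∑ j, (1 - α j) * QS (clSet c j) γ (θ - θstar) := by
      rw [← Finset.sum_sub_distrib, ← Finset.sum_add_distrib]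
      refine Finset.sum_congr rfl fun j _ => ?_
      rw [hpsiexp j]
      ring
    unfold objF
    linarith [ha, hb, hphiexp, hfocΔ]
  -- the three Orc branch vectors
  set OT : Fin n → E d := fun i =>
    (γ i * α (c i) / p0) • (θ i - glAvg c γ α θ)
      + (γ i * τ (c i) * (1 - α (c i)) / p0) • (θ i - clAvg c γ (c i) θ) with hOT
  set OM : Fin n → E d := fun i =>
    (γ i * (1 - τ (c i)) * (1 - α (c i)) / ((1 - p0) * p (c i)))
      • (θ i - clAvg c γ (c i) θ) with hOM
  set OB : Fin n → E d := fun i =>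
    (1 / ((1 - p0) * (1 - p (c i)))) • gradient (f i) (θ i) with hOB
  have hOrc : ∀ (ω : Outcome k) (i : Fin n), Orc c γ α τ p0 p f θ ω i
      = if ω.1 then OT i else if ω.2 (c i) then OM i else OB i := by
    intro ω i
    simp only [Orc, hOT, hOM, hOB]
  -- expectation formula
  have hEeq : (∑ ω : Outcome k, wt p0 p ω * ‖Orc c γ α τ p0 p f θ ω‖ ^ 2)
      = ∑ i, (p0 * ‖OT i‖ ^ 2
          + (1 - p0) * (p (c i) * ‖OM i‖ ^ 2 + (1 - p (c i)) * ‖OB i‖ ^ 2)) := by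
    have h1 : ∀ ω : Outcome k, wt p0 p ω * ‖Orc c γ α τ p0 p f θ ω‖ ^ 2
        = ∑ i, wt p0 p ω * ‖Orc c γ α τ p0 p f θ ω i‖ ^ 2 := by
      intro ω
      rw [PiLp.norm_sq_eq_of_L2, Finset.mul_sum]
    rw [Finset.sum_congr rfl fun ω _ => h1 ω, Finset.sum_comm]
    refine Finset.sum_congr rfl fun i _ => ?_
    have h2 : ∀ ω : Outcome k, wt p0 p ω * ‖Orc c γ α τ p0 p f θ ω i‖ ^ 2
        = wt p0 p ω * (if ω.1 then ‖OT i‖ ^ 2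
            else if ω.2 (c i) then ‖OM i‖ ^ 2 else ‖OB i‖ ^ 2) := by
      intro ω
      rw [hOrc ω i]
      by_cases hb : ω.1
      · simp [hb]
      · by_cases hg : ω.2 (c i) <;> simp [hb, hg]
    rw [Finset.sum_congr rfl fun ω _ => h2 ω]
    exact sum_wt_mul p0 p (c i) _ _ _
  -- pointwise bound on the expected squared norm
  have hEi : ∀ i, p0 * ‖OT i‖ ^ 2
        + (1 - p0) * (p (c i) * ‖OM i‖ ^ 2 + (1 - p (c i)) * ‖OB i‖ ^ 2)
      ≤ (2 / p0) * ‖GS Finset.univ w θ i‖ ^ 2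
        + (2 * (1 - α (c i)) ^ 2 / (p0 + 2 * (1 - p0) * p (c i)))
            * ‖γ i • (θ i - clAvg c γ (c i) θ)‖ ^ 2
        + (1 / ((1 - p0) * (1 - p (c i)))) * ‖gradient (f i) (θ i)‖ ^ 2 := by
    intro i
    have hGSi : GS Finset.univ w θ i = w i • (θ i - glAvg c γ α θ) := by
      simp only [GS, Finset.mem_univ, if_true]
      rw [← hglAvg θ]
    have hOTi : OT i = (γ i * α (c i) / p0) • (θ i - glAvg c γ α θ)
        + (γ i * τ (c i) * (1 - α (c i)) / p0) • (θ i - clAvg c γ (c i) θ) := by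
      rw [hOT]
    have hOMi : OM i = (γ i * (1 - τ (c i)) * (1 - α (c i)) / ((1 - p0) * p (c i)))
        • (θ i - clAvg c γ (c i) θ) := by rw [hOM]
    have hOBi : OB i = (1 / ((1 - p0) * (1 - p (c i)))) • gradient (f i) (θ i) := by
      rw [hOB]
    have hOTb : ‖OT i‖ ^ 2
        ≤ 2 * ((γ i * α (c i) / p0) ^ 2 * ‖θ i - glAvg c γ α θ‖ ^ 2)
          + 2 * ((γ i * τ (c i) * (1 - α (c i)) / p0) ^ 2
              * ‖θ i - clAvg c γ (c i) θ‖ ^ 2) := by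
      rw [hOTi]
      calc ‖(γ i * α (c i) / p0) • (θ i - glAvg c γ α θ)
            + (γ i * τ (c i) * (1 - α (c i)) / p0) • (θ i - clAvg c γ (c i) θ)‖ ^ 2
          ≤ 2 * ‖(γ i * α (c i) / p0) • (θ i - glAvg c γ α θ)‖ ^ 2
            + 2 * ‖(γ i * τ (c i) * (1 - α (c i)) / p0) • (θ i - clAvg c γ (c i) θ)‖ ^ 2 :=
            normsq_add_le _ _
        _ = 2 * ((γ i * α (c i) / p0) ^ 2 * ‖θ i - glAvg c γ α θ‖ ^ 2)
            + 2 * ((γ i * τ (c i) * (1 - α (c i)) / p0) ^ 2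
                * ‖θ i - clAvg c γ (c i) θ‖ ^ 2) := by
            rw [normsq_smul, normsq_smul]
    have hOMb : ‖OM i‖ ^ 2 = (γ i * (1 - τ (c i)) * (1 - α (c i)) / ((1 - p0) * p (c i))) ^ 2
        * ‖θ i - clAvg c γ (c i) θ‖ ^ 2 := by
      rw [hOMi, normsq_smul]
    have hOBb : ‖OB i‖ ^ 2 = (1 / ((1 - p0) * (1 - p (c i)))) ^ 2
        * ‖gradient (f i) (θ i)‖ ^ 2 := by
      rw [hOBi, normsq_smul]
    have hGSn : ‖GS Finset.univ w θ i‖ ^ 2 = (w i) ^ 2 * ‖θ i - glAvg c γ α θ‖ ^ 2 := by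
      rw [hGSi, normsq_smul]
    have hγn : ‖γ i • (θ i - clAvg c γ (c i) θ)‖ ^ 2
        = (γ i) ^ 2 * ‖θ i - clAvg c γ (c i) θ‖ ^ 2 := normsq_smul _ _
    have I1 : p0 * (2 * ((γ i * α (c i) / p0) ^ 2 * ‖θ i - glAvg c γ α θ‖ ^ 2))
        = 2 / p0 * ((w i) ^ 2 * ‖θ i - glAvg c γ α θ‖ ^ 2) := by
      rw [hwval i]
      field_simp
    have I2 : p0 * (2 * ((γ i * τ (c i) * (1 - α (c i)) / p0) ^ 2
            * ‖θ i - clAvg c γ (c i) θ‖ ^ 2))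
        + (1 - p0) * (p (c i) * ((γ i * (1 - τ (c i)) * (1 - α (c i)) / ((1 - p0) * p (c i))) ^ 2
            * ‖θ i - clAvg c γ (c i) θ‖ ^ 2))
        = (2 * (1 - α (c i)) ^ 2 / (p0 + 2 * (1 - p0) * p (c i)))
            * ((γ i) ^ 2 * ‖θ i - clAvg c γ (c i) θ‖ ^ 2) := by
      rw [hτ (c i)]
      exact coefI2 p0 (p (c i)) (γ i) (α (c i)) _ hp0pos hq0 (hppos (c i)) (hDpos (c i))
    have I3 : (1 - p0) * ((1 - p (c i)) * ((1 / ((1 - p0) * (1 - p (c i)))) ^ 2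
            * ‖gradient (f i) (θ i)‖ ^ 2))
        = (1 / ((1 - p0) * (1 - p (c i)))) * ‖gradient (f i) (θ i)‖ ^ 2 :=
      coefI3 (1 - p0) (1 - p (c i)) _ hq0 (hqj (c i))
    have hmul := mul_le_mul_of_nonneg_left hOTb hp0pos.le
    rw [hOMb, hOBb, hGSn, hγn]
    linarith [hmul, I1, I2, I3]
  -- regroup the sums per cluster
  have hsum1 : ∑ i, (2 / p0) * ‖GS Finset.univ w θ i‖ ^ 2
      = (2 / p0) * ‖GS Finset.univ w θ‖ ^ 2 := by
    rw [← Finset.mul_sum, ← PiLp.norm_sq_eq_of_L2]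
  have hsum2 : ∑ i, (2 * (1 - α (c i)) ^ 2 / (p0 + 2 * (1 - p0) * p (c i)))
        * ‖γ i • (θ i - clAvg c γ (c i) θ)‖ ^ 2
      = ∑ j, (2 * (1 - α j) ^ 2 / (p0 + 2 * (1 - p0) * p j))
          * ‖GS (clSet c j) γ θ‖ ^ 2 := by
    rw [← Finset.sum_fiberwise Finset.univ c
      (fun i => (2 * (1 - α (c i)) ^ 2 / (p0 + 2 * (1 - p0) * p (c i)))
        * ‖γ i • (θ i - clAvg c γ (c i) θ)‖ ^ 2)]
    refine Finset.sum_congr rfl fun j _ => ?_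
    have hper : ∀ i ∈ Finset.univ.filter (fun i => c i = j),
        (2 * (1 - α (c i)) ^ 2 / (p0 + 2 * (1 - p0) * p (c i)))
            * ‖γ i • (θ i - clAvg c γ (c i) θ)‖ ^ 2
          = (2 * (1 - α j) ^ 2 / (p0 + 2 * (1 - p0) * p j))
              * ‖γ i • (θ i - clAvg c γ j θ)‖ ^ 2 := by
      intro i hi
      have hci : c i = j := by simpa using hi
      rw [hci]
    rw [Finset.sum_congr rfl hper, ← Finset.mul_sum]
    congr 1
    rw [normSq_GS]
    have hfil : Finset.univ.filter (fun i => c i = j) = clSet c j := rfl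
    rw [hfil]
    refine Finset.sum_congr rfl fun i _ => ?_
    rw [normsq_smul]
    rfl
  have hsum3 : ∑ i, (1 / ((1 - p0) * (1 - p (c i)))) * ‖gradient (f i) (θ i)‖ ^ 2
      = ∑ j, (1 / ((1 - p0) * (1 - p j)))
          * ∑ i ∈ clSet c j, ‖gradient (f i) (θ i)‖ ^ 2 := by
    rw [← Finset.sum_fiberwise Finset.univ c
      (fun i => (1 / ((1 - p0) * (1 - p (c i)))) * ‖gradient (f i) (θ i)‖ ^ 2)]
    refine Finset.sum_congr rfl fun j _ => ?_
    have hper : ∀ i ∈ Finset.univ.filter (fun i => c i = j),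
        (1 / ((1 - p0) * (1 - p (c i)))) * ‖gradient (f i) (θ i)‖ ^ 2
          = (1 / ((1 - p0) * (1 - p j))) * ‖gradient (f i) (θ i)‖ ^ 2 := by
      intro i hi
      have hci : c i = j := by simpa using hi
      rw [hci]
    rw [Finset.sum_congr rfl hper, ← Finset.mul_sum]
    rfl
  -- convexity of each f i and cocoercivity bounds
  have hconvf : ∀ i, ConvexOn ℝ Set.univ (f i) := by
    intro i
    have hμ2 : (0:ℝ) ≤ μ / 2 := by linarith
    have h1 := (hsc i).add ((convexOn_normSq (H := E d)).smul hμ2)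
    have h2 : ((fun x => f i x - μ / 2 * ‖x‖ ^ 2)
        + fun x : E d => (μ / 2) • ‖x‖ ^ 2) = f i := by
      funext z
      simp only [Pi.add_apply, smul_eq_mul]
      ring
    rwa [h2] at h1
  have hDfnn : ∀ i, 0 ≤ Df i := by
    intro i
    have h := grad_ineq (f i) (fun z => gradient (f i) z)
      (fun z => (hdiff i z).hasGradientAt) (hconvf i) (θ i) (θstar i)
    rw [hDfval i]
    linarith
  have hfb : ∀ i, ‖gradient (f i) (θ i)‖ ^ 2
      ≤ 4 * L * Df i + 2 * ‖gradient (f i) (θstar i)‖ ^ 2 := by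
    intro i
    have hco := cocoercivity (f i) (fun z => gradient (f i) z)
      (fun z => (hdiff i z).hasGradientAt) (hconvf i) L hL (hsm i) (θ i) (θstar i)
    have htri := normsq_add_le (gradient (f i) (θ i) - gradient (f i) (θstar i))
      (gradient (f i) (θstar i))
    rw [sub_add_cancel] at htri
    rw [hDfval i]
    linarith
  -- comparison with esL
  have hM1 : Finset.univ.sup' hne w
      ≤ Finset.univ.sup' (Finset.univ_nonempty_iff.mpr ⟨⟨0, hk⟩⟩)
          (fun j => (clSet c j).sup' (hc j) fun i' => α j * γ i') := by
    apply Finset.sup'_le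
    intro i _
    calc w i = α (c i) * γ i := rfl
      _ ≤ (clSet c (c i)).sup' (hc (c i)) (fun i' => α (c i) * γ i') :=
          Finset.le_sup' (f := fun i' => α (c i) * γ i') (hmemcl i)
      _ ≤ _ := Finset.le_sup'
          (f := fun j => (clSet c j).sup' (hc j) fun i' => α j * γ i')
          (Finset.mem_univ (c i))
  have hL1 : 2 / p0 * Finset.univ.sup' hne w ≤ esL hk c hc γ α L p0 p := by
    unfold esL
    refine le_trans ?_ (le_max_left _ _)
    refine le_trans ?_ (le_max_left _ _)
    exact mul_le_mul_of_nonneg_left hM1 (by positivity)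
  have hL2 : ∀ j, 2 * (1 - α j) * ((clSet c j).sup' (hc j) γ)
        / (p0 + 2 * (1 - p0) * p j) ≤ esL hk c hc γ α L p0 p := by
    intro j
    unfold esL
    refine le_trans ?_ (le_max_left _ _)
    refine le_trans ?_ (le_max_right _ _)
    exact Finset.le_sup'
      (f := fun j => 2 * (1 - α j) * ((clSet c j).sup' (hc j) γ)
        / (p0 + 2 * (1 - p0) * p j)) (Finset.mem_univ j)
  have hL3 : ∀ j, L / (1 - p0) * (1 / (1 - p j)) ≤ esL hk c hc γ α L p0 p := by
    intro j
    unfold esL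
    refine le_trans ?_ (le_max_right _ _)
    have h1 := Finset.le_sup' (f := fun j => (1:ℝ) / (1 - p j)) (Finset.mem_univ j)
    exact mul_le_mul_of_nonneg_left h1 (by positivity)
  -- rewrite sigmaSq
  have hsig : sigmaSq c γ α f p0 p θstar
      = 2 / p0 * ‖GS Finset.univ w θstar‖ ^ 2
        + (∑ j, (2 * (1 - α j) ^ 2 / (p0 + 2 * (1 - p0) * p j))
            * ‖GS (clSet c j) γ θstar‖ ^ 2)
        + ∑ j, (1 / ((1 - p0) * (1 - p j)))
            * ∑ i ∈ clSet c j, ‖gradient (f i) (θstar i)‖ ^ 2 := by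
    have e2 : ∑ j, (2 * (1 - α j) ^ 2 / (p0 + 2 * (1 - p0) * p j))
          * ‖gradient (psi c γ j) θstar‖ ^ 2
        = ∑ j, (2 * (1 - α j) ^ 2 / (p0 + 2 * (1 - p0) * p j))
            * ‖GS (clSet c j) γ θstar‖ ^ 2 :=
      Finset.sum_congr rfl fun j _ => by rw [hgψ j]
    have e3 : (1 / (1 - p0)) * ∑ j, (1 / (1 - p j))
          * ‖gradient (clLoss c f j) θstar‖ ^ 2
        = ∑ j, (1 / ((1 - p0) * (1 - p j)))
            * ∑ i ∈ clSet c j, ‖gradient (f i) (θstar i)‖ ^ 2 := by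
      rw [Finset.mul_sum]
      refine Finset.sum_congr rfl fun j _ => ?_
      rw [hgF j, normSq_ite, ← one_div_mul_one_div]
      ring
    unfold sigmaSq
    rw [hgφ, e2, e3]
  -- main chain of inequalities
  set ℒ := esL hk c hc γ α L p0 p with hℒdef
  have hB1 : (2 / p0) * ‖GS Finset.univ w θ‖ ^ 2
      ≤ 4 * ℒ * QS Finset.univ w (θ - θstar)
        + 2 * (2 / p0 * ‖GS Finset.univ w θstar‖ ^ 2) := by
    have h1 := GS_theta_bound Finset.univ hne w (fun i _ => (hwpos i).le) θ θstar
    have hQnn := QS_nonneg Finset.univ w (fun i _ => (hwpos i).le) (θ - θstar)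
    have h3 := mul_le_mul_of_nonneg_left h1 (by positivity : (0:ℝ) ≤ 2 / p0)
    have h2 : (2 / p0) * (4 * Finset.univ.sup' hne w * QS Finset.univ w (θ - θstar))
        ≤ 4 * ℒ * QS Finset.univ w (θ - θstar) := by
      have h4 := mul_le_mul_of_nonneg_right hL1 hQnn
      calc (2 / p0) * (4 * Finset.univ.sup' hne w * QS Finset.univ w (θ - θstar))
          = 4 * (2 / p0 * Finset.univ.sup' hne w * QS Finset.univ w (θ - θstar)) := by ring
        _ ≤ 4 * (ℒ * QS Finset.univ w (θ - θstar)) := by linarith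
        _ = 4 * ℒ * QS Finset.univ w (θ - θstar) := by ring
    calc (2 / p0) * ‖GS Finset.univ w θ‖ ^ 2
        ≤ (2 / p0) * (4 * Finset.univ.sup' hne w * QS Finset.univ w (θ - θstar)
            + 2 * ‖GS Finset.univ w θstar‖ ^ 2) := h3
      _ = (2 / p0) * (4 * Finset.univ.sup' hne w * QS Finset.univ w (θ - θstar))
          + 2 * (2 / p0 * ‖GS Finset.univ w θstar‖ ^ 2) := by ring
      _ ≤ 4 * ℒ * QS Finset.univ w (θ - θstar)
          + 2 * (2 / p0 * ‖GS Finset.univ w θstar‖ ^ 2) := by linarith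
  have hB2 : ∀ j, (2 * (1 - α j) ^ 2 / (p0 + 2 * (1 - p0) * p j))
        * ‖GS (clSet c j) γ θ‖ ^ 2
      ≤ 4 * ℒ * ((1 - α j) * QS (clSet c j) γ (θ - θstar))
        + 2 * ((2 * (1 - α j) ^ 2 / (p0 + 2 * (1 - p0) * p j))
            * ‖GS (clSet c j) γ θstar‖ ^ 2) := by
    intro j
    have h1 := GS_theta_bound (clSet c j) (hc j) γ (fun i _ => (hγ i).le) θ θstar
    have hQnn := QS_nonneg (clSet c j) γ (fun i _ => (hγ i).le) (θ - θstar)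
    have hKnn : (0:ℝ) ≤ 2 * (1 - α j) ^ 2 / (p0 + 2 * (1 - p0) * p j) := by
      have := hDpos j
      positivity
    have h1α : (0:ℝ) ≤ 1 - α j := by linarith [hα1 j]
    have h3 := mul_le_mul_of_nonneg_left h1 hKnn
    have h2 : (2 * (1 - α j) ^ 2 / (p0 + 2 * (1 - p0) * p j))
          * (4 * ((clSet c j).sup' (hc j) γ) * QS (clSet c j) γ (θ - θstar))
        ≤ 4 * ℒ * ((1 - α j) * QS (clSet c j) γ (θ - θstar)) := by
      have h5 := mul_le_mul_of_nonneg_right (hL2 j)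
        (by positivity : (0:ℝ) ≤ 4 * ((1 - α j) * QS (clSet c j) γ (θ - θstar)))
      calc (2 * (1 - α j) ^ 2 / (p0 + 2 * (1 - p0) * p j))
            * (4 * ((clSet c j).sup' (hc j) γ) * QS (clSet c j) γ (θ - θstar))
          = 2 * (1 - α j) * ((clSet c j).sup' (hc j) γ) / (p0 + 2 * (1 - p0) * p j)
              * (4 * ((1 - α j) * QS (clSet c j) γ (θ - θstar))) := by ring
        _ ≤ ℒ * (4 * ((1 - α j) * QS (clSet c j) γ (θ - θstar))) := h5
        _ = 4 * ℒ * ((1 - α j) * QS (clSet c j) γ (θ - θstar)) := by ring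
    calc (2 * (1 - α j) ^ 2 / (p0 + 2 * (1 - p0) * p j)) * ‖GS (clSet c j) γ θ‖ ^ 2
        ≤ (2 * (1 - α j) ^ 2 / (p0 + 2 * (1 - p0) * p j))
            * (4 * ((clSet c j).sup' (hc j) γ) * QS (clSet c j) γ (θ - θstar)
              + 2 * ‖GS (clSet c j) γ θstar‖ ^ 2) := h3
      _ = (2 * (1 - α j) ^ 2 / (p0 + 2 * (1 - p0) * p j))
            * (4 * ((clSet c j).sup' (hc j) γ) * QS (clSet c j) γ (θ - θstar))
          + 2 * ((2 * (1 - α j) ^ 2 / (p0 + 2 * (1 - p0) * p j))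
              * ‖GS (clSet c j) γ θstar‖ ^ 2) := by ring
      _ ≤ 4 * ℒ * ((1 - α j) * QS (clSet c j) γ (θ - θstar))
          + 2 * ((2 * (1 - α j) ^ 2 / (p0 + 2 * (1 - p0) * p j))
              * ‖GS (clSet c j) γ θstar‖ ^ 2) := by linarith
  have hB3 : ∀ j, (1 / ((1 - p0) * (1 - p j)))
        * ∑ i ∈ clSet c j, ‖gradient (f i) (θ i)‖ ^ 2
      ≤ 4 * ℒ * (∑ i ∈ clSet c j, Df i)
        + 2 * ((1 / ((1 - p0) * (1 - p j)))
            * ∑ i ∈ clSet c j, ‖gradient (f i) (θstar i)‖ ^ 2) := by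
    intro j
    have hcnn : (0:ℝ) ≤ 1 / ((1 - p0) * (1 - p j)) := by
      have := hq0
      have := hqj j
      positivity
    have h1 : ∑ i ∈ clSet c j, ‖gradient (f i) (θ i)‖ ^ 2
        ≤ 4 * L * (∑ i ∈ clSet c j, Df i)
          + 2 * ∑ i ∈ clSet c j, ‖gradient (f i) (θstar i)‖ ^ 2 := by
      calc ∑ i ∈ clSet c j, ‖gradient (f i) (θ i)‖ ^ 2
          ≤ ∑ i ∈ clSet c j, (4 * L * Df i + 2 * ‖gradient (f i) (θstar i)‖ ^ 2) :=
            Finset.sum_le_sum fun i _ => hfb i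
        _ = 4 * L * (∑ i ∈ clSet c j, Df i)
            + 2 * ∑ i ∈ clSet c j, ‖gradient (f i) (θstar i)‖ ^ 2 := by
            rw [Finset.sum_add_distrib, ← Finset.mul_sum, ← Finset.mul_sum]
    have hDfsnn : (0:ℝ) ≤ ∑ i ∈ clSet c j, Df i :=
      Finset.sum_nonneg fun i _ => hDfnn i
    have h2 := mul_le_mul_of_nonneg_left h1 hcnn
    have h3 : (1 / ((1 - p0) * (1 - p j))) * (4 * L * (∑ i ∈ clSet c j, Df i))
        ≤ 4 * ℒ * (∑ i ∈ clSet c j, Df i) := by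
      have h4 : L / (1 - p0) * (1 / (1 - p j)) = (1 / ((1 - p0) * (1 - p j))) * L := by
        field_simp
      have h5 := mul_le_mul_of_nonneg_right (hL3 j)
        (by positivity : (0:ℝ) ≤ 4 * (∑ i ∈ clSet c j, Df i))
      calc (1 / ((1 - p0) * (1 - p j))) * (4 * L * (∑ i ∈ clSet c j, Df i))
          = L / (1 - p0) * (1 / (1 - p j)) * (4 * (∑ i ∈ clSet c j, Df i)) := by
            rw [h4]; ring
        _ ≤ ℒ * (4 * (∑ i ∈ clSet c j, Df i)) := h5
        _ = 4 * ℒ * (∑ i ∈ clSet c j, Df i) := by ring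
    calc (1 / ((1 - p0) * (1 - p j))) * ∑ i ∈ clSet c j, ‖gradient (f i) (θ i)‖ ^ 2
        ≤ (1 / ((1 - p0) * (1 - p j))) * (4 * L * (∑ i ∈ clSet c j, Df i)
            + 2 * ∑ i ∈ clSet c j, ‖gradient (f i) (θstar i)‖ ^ 2) := h2
      _ = (1 / ((1 - p0) * (1 - p j))) * (4 * L * (∑ i ∈ clSet c j, Df i))
          + 2 * ((1 / ((1 - p0) * (1 - p j)))
              * ∑ i ∈ clSet c j, ‖gradient (f i) (θstar i)‖ ^ 2) := by ring
      _ ≤ 4 * ℒ * (∑ i ∈ clSet c j, Df i)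
          + 2 * ((1 / ((1 - p0) * (1 - p j)))
              * ∑ i ∈ clSet c j, ‖gradient (f i) (θstar i)‖ ^ 2) := by linarith
  have hfibDf : ∑ j, ∑ i ∈ clSet c j, Df i = ∑ i, Df i := by
    simp only [clSet]
    exact Finset.sum_fiberwise Finset.univ c Df
  have h2a : ∑ j, (4 * ℒ * ((1 - α j) * QS (clSet c j) γ (θ - θstar))
        + 2 * ((2 * (1 - α j) ^ 2 / (p0 + 2 * (1 - p0) * p j))
            * ‖GS (clSet c j) γ θstar‖ ^ 2))
      = 4 * ℒ * (∑ j, (1 - α j) * QS (clSet c j) γ (θ - θstar))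
        + 2 * ∑ j, (2 * (1 - α j) ^ 2 / (p0 + 2 * (1 - p0) * p j))
            * ‖GS (clSet c j) γ θstar‖ ^ 2 := by
    rw [Finset.sum_add_distrib, ← Finset.mul_sum, ← Finset.mul_sum]
  have h3a : ∑ j, (4 * ℒ * (∑ i ∈ clSet c j, Df i)
        + 2 * ((1 / ((1 - p0) * (1 - p j)))
            * ∑ i ∈ clSet c j, ‖gradient (f i) (θstar i)‖ ^ 2))
      = 4 * ℒ * (∑ j, ∑ i ∈ clSet c j, Df i)
        + 2 * ∑ j, (1 / ((1 - p0) * (1 - p j)))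
            * ∑ i ∈ clSet c j, ‖gradient (f i) (θstar i)‖ ^ 2 := by
    rw [Finset.sum_add_distrib, ← Finset.mul_sum, ← Finset.mul_sum]
  calc ∑ ω : Outcome k, wt p0 p ω * ‖Orc c γ α τ p0 p f θ ω‖ ^ 2
      = ∑ i, (p0 * ‖OT i‖ ^ 2
          + (1 - p0) * (p (c i) * ‖OM i‖ ^ 2 + (1 - p (c i)) * ‖OB i‖ ^ 2)) := hEeq
    _ ≤ ∑ i, ((2 / p0) * ‖GS Finset.univ w θ i‖ ^ 2
          + (2 * (1 - α (c i)) ^ 2 / (p0 + 2 * (1 - p0) * p (c i)))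
              * ‖γ i • (θ i - clAvg c γ (c i) θ)‖ ^ 2
          + (1 / ((1 - p0) * (1 - p (c i)))) * ‖gradient (f i) (θ i)‖ ^ 2) :=
        Finset.sum_le_sum fun i _ => hEi i
    _ = (2 / p0) * ‖GS Finset.univ w θ‖ ^ 2
        + (∑ j, (2 * (1 - α j) ^ 2 / (p0 + 2 * (1 - p0) * p j))
            * ‖GS (clSet c j) γ θ‖ ^ 2)
        + ∑ j, (1 / ((1 - p0) * (1 - p j)))
            * ∑ i ∈ clSet c j, ‖gradient (f i) (θ i)‖ ^ 2 := by
        rw [Finset.sum_add_distrib, Finset.sum_add_distrib, hsum1, hsum2, hsum3]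
    _ ≤ (4 * ℒ * QS Finset.univ w (θ - θstar)
          + 2 * (2 / p0 * ‖GS Finset.univ w θstar‖ ^ 2))
        + (∑ j, (4 * ℒ * ((1 - α j) * QS (clSet c j) γ (θ - θstar))
            + 2 * ((2 * (1 - α j) ^ 2 / (p0 + 2 * (1 - p0) * p j))
                * ‖GS (clSet c j) γ θstar‖ ^ 2)))
        + ∑ j, (4 * ℒ * (∑ i ∈ clSet c j, Df i)
            + 2 * ((1 / ((1 - p0) * (1 - p j)))
                * ∑ i ∈ clSet c j, ‖gradient (f i) (θstar i)‖ ^ 2)) :=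
        add_le_add (add_le_add hB1 (Finset.sum_le_sum fun j _ => hB2 j))
          (Finset.sum_le_sum fun j _ => hB3 j)
    _ = 4 * ℒ * ((∑ i, Df i) + (∑ j, (1 - α j) * QS (clSet c j) γ (θ - θstar))
          + QS Finset.univ w (θ - θstar))
        + 2 * sigmaSq c γ α f p0 p θstar := by
        rw [h2a, h3a, hfibDf, hsig]
        ring
    _ = 4 * esL hk c hc γ α L p0 p * (objF c γ α f θ - objF c γ α f θstar)
        + 2 * sigmaSq c γ α f p0 p θstar := by
        rw [hgap, hℒdef]
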